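/- Let H : ℝ^d → ℝ be such that ∇H is analytic on all of ℝ^d (with Taylor series at each point converging to ∇H everywhere). Suppose ḡ : ℝ^d × ℝ^d → ℝ^d satisfies the discrete gradient condition ⟨ḡ(x,y), y−x⟩ = H(y) − H(x) for all x, y, that for every x the map y ↦ ḡ(x,y) is analytic on ℝ^d with everywhere-converging Taylor series, and that the Jacobian D₂ḡ(x,y) is a symmetric matrix for all x, y. Then ḡ coincides with the AVF discrete gradient: ḡ(x,y) = ∫₀¹ ∇H((1−ξ)x + ξy) dξ for all x, y ∈ ℝ^d. That is, the AVF discrete gradient is the unique discrete gradient with everywhere symmetric Jacobian in its second argument. -/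

import Mathlib

open scoped RealInnerProductSpace

/-- **Proposition 1, uniqueness.** If `∇H` is analytic with everywhere-converging
Taylor series, and `ḡ` is a discrete gradient of `H` which is analytic in its second argument
with everywhere-converging Taylor series and whose Jacobian in the second argument is symmetric
everywhere, then `ḡ` is the AVF discrete gradient. -/
theorem avf_unique_discrete_gradient_with_symmetric_jacobian
    (d : ℕ) (H : EuclideanSpace ℝ (Fin d) → ℝ) (hH : Differentiable ℝ H)
    (hA : AnalyticOnNhd ℝ (gradient H) Set.univ)
    (htaylorH : ∀ x z : EuclideanSpace ℝ (Fin d),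
      HasSum (fun κ : ℕ => ((κ.factorial : ℝ))⁻¹ •
          iteratedFDeriv ℝ κ (gradient H) x (fun _ => z - x)) (gradient H z))
    (g : EuclideanSpace ℝ (Fin d) → EuclideanSpace ℝ (Fin d) → EuclideanSpace ℝ (Fin d))
    (hdg : ∀ x y, ⟪g x y, y - x⟫ = H y - H x)
    (hgA : ∀ x, AnalyticOnNhd ℝ (g x) Set.univ)
    (htaylorg : ∀ x c z : EuclideanSpace ℝ (Fin d),
      HasSum (fun κ : ℕ => ((κ.factorial : ℝ))⁻¹ •
          iteratedFDeriv ℝ κ (g x) c (fun _ => z - c)) (g x z))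
    (hsymm : ∀ x y u v : EuclideanSpace ℝ (Fin d),
      ⟪fderiv ℝ (g x) y u, v⟫ = ⟪fderiv ℝ (g x) y v, u⟫) :
    ∀ x y : EuclideanSpace ℝ (Fin d),
      g x y = ∫ ξ in (0:ℝ)..1, gradient H ((1 - ξ) • x + ξ • y) := by
  intro x y
  have hgd : ∀ z, DifferentiableAt ℝ (g x) z := fun z => (hgA x z trivial).differentiableAt
  -- key identity
  have key : ∀ z : EuclideanSpace ℝ (Fin d),
      fderiv ℝ (g x) z (z - x) + g x z = gradient H z := by
    intro z
    have h1 : HasFDerivAt (fun w => ⟪g x w, w - x⟫)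
        ((fderivInnerCLM ℝ (g x z, z - x)).comp <|
          (fderiv ℝ (g x) z).prod (ContinuousLinearMap.id ℝ _)) z := by
      have := ((hgd z).hasFDerivAt).inner ℝ ((hasFDerivAt_id z).sub_const x)
      simpa using this
    have h2 : HasFDerivAt (fun w => ⟪g x w, w - x⟫)
        (InnerProductSpace.toDual ℝ _ (gradient H z)) z := by
      have h3 : (fun w => ⟪g x w, w - x⟫) = fun w => H w - H x := by
        funext w; exact hdg x w
      rw [h3]
      simpa using ((hH z).hasGradientAt.hasFDerivAt).sub_const (H x)
    have := h1.unique h2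
    refine ext_inner_right ℝ (fun u => ?_)
    have hu := congrFun (congrArg DFunLike.coe this) u
    simp only [ContinuousLinearMap.comp_apply, ContinuousLinearMap.prod_apply,
      fderivInnerCLM_apply, ContinuousLinearMap.id_apply,
      InnerProductSpace.toDual_apply_apply] at hu
    rw [inner_add_left, hsymm x z (z - x) u]
    rw [← hu]
    ring
  -- the curve
  set c : ℝ → EuclideanSpace ℝ (Fin d) := fun ξ => x + ξ • (y - x) with hc
  have hcd : ∀ ξ : ℝ, HasDerivAt c (y - x) ξ := by
    intro ξ
    simpa [hc] using ((hasDerivAt_id ξ).smul_const (y - x)).const_add x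
  set ψ : ℝ → EuclideanSpace ℝ (Fin d) := fun ξ => ξ • g x (c ξ) with hψ
  have hψd : ∀ ξ : ℝ, HasDerivAt ψ (gradient H (c ξ)) ξ := by
    intro ξ
    have hGc : HasDerivAt (fun t => g x (c t)) (fderiv ℝ (g x) (c ξ) (y - x)) ξ :=
      ((hgd (c ξ)).hasFDerivAt.comp_hasDerivAt ξ (hcd ξ))
    have h6 := (hasDerivAt_id ξ).smul hGc
    have h4 : ξ • fderiv ℝ (g x) (c ξ) (y - x) + (1:ℝ) • g x (c ξ)
        = gradient H (c ξ) := by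
      rw [← key (c ξ)]
      have h7 : c ξ - x = ξ • (y - x) := by simp [hc]
      rw [h7, map_smul]
      module
    exact h4 ▸ h6
  have hcont : Continuous fun ξ : ℝ => gradient H (c ξ) := by
    have h5 : Continuous (gradient H) :=
      continuousOn_univ.mp (hA.continuousOn)
    exact h5.comp (by fun_prop)
  have hint := intervalIntegral.integral_eq_sub_of_hasDerivAt
    (f := ψ) (f' := fun ξ => gradient H (c ξ)) (a := (0:ℝ)) (b := 1)
    (fun t _ => hψd t) (hcont.intervalIntegrable 0 1)
  have hψ1 : ψ 1 = g x y := by simp [hψ, hc]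
  have hψ0 : ψ 0 = 0 := by simp [hψ]
  rw [hψ1, hψ0, sub_zero] at hint
  have h8 : ∀ ξ : ℝ, (1 - ξ) • x + ξ • y = c ξ := by
    intro ξ; simp only [hc]; module
  simp only [h8]
  exact hint.symm
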